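/- Let X, Y, Z, E, F be Banach spaces, 1 < p, q < ∞ with 1/p + 1/q ≤ 1, define r by 1/r = 1/p + 1/q, and suppose Z* is isometrically identified with a closed subspace of L(E*,F). Let U be a closed subspace of L(X*,Y). If an operator S : U → Z factors as S = S_1 ∘ S_2 where S_2 : U → W is (ℓ^s_p,ℓ_p)-summing and the adjoint S_1* : Z* → W* of S_1 : W → Z is (ℓ^s_q,ℓ_q)-summing, then S is (ℓ^s_p,ℓ^s_q)-dominated. -/

import Mathlib

open MeasureTheory Filter Topology

/-- The closed unit ball of the dual of `X`, equipped with the weak* topology. -/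
abbrev DualBall (X : Type*) [NormedAddCommGroup X] [NormedSpace ℝ X] : Type _ :=
  {φ : WeakDual ℝ X // ‖WeakDual.toStrongDual φ‖ ≤ 1}

noncomputable instance (X : Type*) [NormedAddCommGroup X] [NormedSpace ℝ X] :
    MeasurableSpace (DualBall X) := borel _

instance (X : Type*) [NormedAddCommGroup X] [NormedSpace ℝ X] :
    BorelSpace (DualBall X) := ⟨rfl⟩

variable {X Y Z : Type*} [NormedAddCommGroup X] [NormedSpace ℝ X]
  [NormedAddCommGroup Y] [NormedSpace ℝ Y] [NormedAddCommGroup Z] [NormedSpace ℝ Z]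

/-- The restriction of an operator `T : X* → Y` to the dual unit ball. -/
noncomputable def evalBall (T : StrongDual ℝ X →L[ℝ] Y) (φ : DualBall X) : Y :=
  T (WeakDual.toStrongDual φ.1)

/-- `T` belongs to `UM(X*,Y)`: its restriction to the dual ball is universally
strongly measurable. -/
def MemUM (T : StrongDual ℝ X →L[ℝ] Y) : Prop :=
  ∀ (μ : Measure (DualBall X)), IsProbabilityMeasure μ → μ.Regular →
    AEStronglyMeasurable (evalBall T) μ

/-- `T` belongs to the ε-product `X ε Y`: its restriction to the dual ball is
weak*-to-norm continuous. -/
def MemEps (T : StrongDual ℝ X →L[ℝ] Y) : Prop :=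
  Continuous (evalBall T)

/-- `S` is `(ℓ^s_p, ℓ_p)`-summing. -/
def IsLpSumming (p : ℝ) (U : Submodule ℝ (StrongDual ℝ X →L[ℝ] Y))
    (S : U →L[ℝ] Z) : Prop :=
  ∃ K : ℝ, 0 ≤ K ∧ ∀ (n : ℕ) (T : Fin n → U),
    (∑ i, ‖S (T i)‖ ^ p) ^ (1/p) ≤
      K * ⨆ φ : DualBall X, (∑ i, ‖evalBall (T i : StrongDual ℝ X →L[ℝ] Y) φ‖ ^ p) ^ (1/p)

/-- `S` is `(ℓ^s_p, ℓ_p)`-controlled. -/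
def IsLpControlled (p : ℝ) (U : Submodule ℝ (StrongDual ℝ X →L[ℝ] Y))
    (S : U →L[ℝ] Z) : Prop :=
  ∃ K : ℝ, 0 ≤ K ∧ ∃ μ : Measure (DualBall X), IsProbabilityMeasure μ ∧ μ.Regular ∧
    ∀ T : U, ‖S T‖ ≤
      K * (∫ φ, ‖evalBall (T : StrongDual ℝ X →L[ℝ] Y) φ‖ ^ p ∂μ) ^ (1/p)

/-- SOT convergence of a sequence of operators. -/
def SOTConvergesTo (T : ℕ → (StrongDual ℝ X →L[ℝ] Y))
    (T₀ : StrongDual ℝ X →L[ℝ] Y) : Prop :=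
  ∀ x' : StrongDual ℝ X, Tendsto (fun n => ‖T n x' - T₀ x'‖) atTop (𝓝 0)

/-- **Kwapień-type factorization, (v) ⇒ (i).**  Suppose `Z*` is isometrically identified
(via `J`) with a closed subspace of `L(E*,F)` and `1/p + 1/q = 1/r ≤ 1`.  If `S : U → Z`
factors as `S = S₁ ∘ S₂` where `S₂ : U → W` is `(ℓ^s_p, ℓ_p)`-summing and the adjoint
`S₁* : Z* → W*` of `S₁ : W → Z` is `(ℓ^s_q, ℓ_q)`-summing, then `S` is
`(ℓ^s_p, ℓ^s_q)`-dominated. -/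
theorem lpq_dominated_of_factorization
    {Z E F W : Type*}
    [NormedAddCommGroup Z] [NormedSpace ℝ Z] [CompleteSpace Z]
    [NormedAddCommGroup E] [NormedSpace ℝ E] [CompleteSpace E]
    [NormedAddCommGroup F] [NormedSpace ℝ F] [CompleteSpace F]
    [NormedAddCommGroup W] [NormedSpace ℝ W] [CompleteSpace W]
    [CompleteSpace X] [CompleteSpace Y]
    (p q r : ℝ) (hp : 1 < p) (hq : 1 < q) (hpq : 1/p + 1/q ≤ 1)
    (hr : 1/r = 1/p + 1/q)
    (J : StrongDual ℝ Z →ₗᵢ[ℝ] (StrongDual ℝ E →L[ℝ] F))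
    (U : Submodule ℝ (StrongDual ℝ X →L[ℝ] Y))
    (hUclosed : IsClosed (U : Set (StrongDual ℝ X →L[ℝ] Y)))
    (S : U →L[ℝ] Z) (S₂ : U →L[ℝ] W) (S₁ : W →L[ℝ] Z)
    (hS₂ : IsLpSumming p U S₂)
    (hS₁ : ∃ K : ℝ, 0 ≤ K ∧ ∀ (n : ℕ) (z' : Fin n → StrongDual ℝ Z),
      (∑ i, ‖(z' i).comp S₁‖ ^ q) ^ (1/q) ≤
        K * ⨆ ψ : DualBall E, (∑ i, ‖evalBall (J (z' i)) ψ‖ ^ q) ^ (1/q))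
    (hfact : ∀ T : U, S₁ (S₂ T) = S T) :
    ∃ K : ℝ, 0 ≤ K ∧ ∀ (n : ℕ) (T : Fin n → U) (z' : Fin n → StrongDual ℝ Z),
      (∑ i, |z' i (S (T i))| ^ r) ^ (1/r) ≤
        K * (⨆ φ : DualBall X,
              (∑ i, ‖evalBall (T i : StrongDual ℝ X →L[ℝ] Y) φ‖ ^ p) ^ (1/p))
          * (⨆ ψ : DualBall E, (∑ i, ‖evalBall (J (z' i)) ψ‖ ^ q) ^ (1/q)) := by
  classical
  obtain ⟨K₂, hK₂, h₂⟩ := hS₂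
  obtain ⟨K₁, hK₁, h₁⟩ := hS₁
  refine ⟨K₂ * K₁, mul_nonneg hK₂ hK₁, fun n T z' => ?_⟩
  have hp0 : 0 < p := lt_trans one_pos hp
  have hq0 : 0 < q := lt_trans one_pos hq
  have hr1 : 0 < 1/r := by rw [hr]; positivity
  have hr0 : 0 < r := one_div_pos.mp hr1
  have hrp : r < p := by
    have h1 : 1/p < 1/r := by rw [hr]; have := one_div_pos.mpr hq0; linarith
    exact lt_of_one_div_lt_one_div hp0 h1
  have hconj : Real.HolderConjugate (p/r) (q/r) := by
    rw [Real.holderConjugate_iff]; constructor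
    · rw [lt_div_iff₀ hr0, one_mul]; exact hrp
    · rw [← one_div, ← one_div, one_div_div, one_div_div]
      field_simp
      field_simp at hr
      linarith
  set A : Fin n → ℝ := fun i => ‖S₂ (T i)‖ with hA
  set B : Fin n → ℝ := fun i => ‖(z' i).comp S₁‖ with hB
  have step1 : ∀ i, |z' i (S (T i))| ≤ A i * B i := by
    intro i
    have : z' i (S (T i)) = ((z' i).comp S₁) (S₂ (T i)) := by
      simp [hfact]
    rw [this, ← Real.norm_eq_abs, mul_comm]
    exact ((z' i).comp S₁).le_opNorm (S₂ (T i))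
  have step2 : ∑ i, |z' i (S (T i))| ^ r ≤ ∑ i, (A i ^ r * B i ^ r) := by
    refine Finset.sum_le_sum fun i _ => ?_
    rw [← Real.mul_rpow (norm_nonneg _) (norm_nonneg _)]
    exact Real.rpow_le_rpow (abs_nonneg _) (step1 i) hr0.le
  have step3 : ∑ i, (A i ^ r * B i ^ r) ≤
      (∑ i, A i ^ p) ^ (r/p) * (∑ i, B i ^ q) ^ (r/q) := by
    have := Real.inner_le_Lp_mul_Lq_of_nonneg (s := Finset.univ)
      (f := fun i => A i ^ r) (g := fun i => B i ^ r) hconj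
      (fun i _ => Real.rpow_nonneg (norm_nonneg _) _)
      (fun i _ => Real.rpow_nonneg (norm_nonneg _) _)
    have e1 : ∀ i, (A i ^ r) ^ (p/r) = A i ^ p := fun i => by
      rw [← Real.rpow_mul (norm_nonneg _)]
      congr 1
      field_simp
    have e2 : ∀ i, (B i ^ r) ^ (q/r) = B i ^ q := fun i => by
      rw [← Real.rpow_mul (norm_nonneg _)]
      congr 1
      field_simp
    have e3 : 1/(p/r) = r/p := one_div_div _ _
    have e4 : 1/(q/r) = r/q := one_div_div _ _
    simp only [e1, e2, e3, e4] at this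
    exact this
  have sumA_nonneg : (0:ℝ) ≤ ∑ i, A i ^ p :=
    Finset.sum_nonneg fun i _ => Real.rpow_nonneg (norm_nonneg _) _
  have sumB_nonneg : (0:ℝ) ≤ ∑ i, B i ^ q :=
    Finset.sum_nonneg fun i _ => Real.rpow_nonneg (norm_nonneg _) _
  have step4 : (∑ i, |z' i (S (T i))| ^ r) ^ (1/r) ≤
      (∑ i, A i ^ p) ^ (1/p) * (∑ i, B i ^ q) ^ (1/q) := by
    have hle : (∑ i, |z' i (S (T i))| ^ r) ^ (1/r) ≤
        ((∑ i, A i ^ p) ^ (r/p) * (∑ i, B i ^ q) ^ (r/q)) ^ (1/r) :=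
      Real.rpow_le_rpow
        (Finset.sum_nonneg fun i _ => Real.rpow_nonneg (abs_nonneg _) _)
        (le_trans step2 step3) hr1.le
    refine le_trans hle (le_of_eq ?_)
    rw [Real.mul_rpow (Real.rpow_nonneg sumA_nonneg _) (Real.rpow_nonneg sumB_nonneg _),
      ← Real.rpow_mul sumA_nonneg, ← Real.rpow_mul sumB_nonneg]
    congr 2 <;> field_simp <;> ring
  have hsupX : (0:ℝ) ≤ ⨆ φ : DualBall X,
      (∑ i, ‖evalBall (T i : StrongDual ℝ X →L[ℝ] Y) φ‖ ^ p) ^ (1/p) :=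
    Real.iSup_nonneg fun φ => Real.rpow_nonneg
      (Finset.sum_nonneg fun i _ => Real.rpow_nonneg (norm_nonneg _) _) _
  have hsupE : (0:ℝ) ≤ ⨆ ψ : DualBall E, (∑ i, ‖evalBall (J (z' i)) ψ‖ ^ q) ^ (1/q) :=
    Real.iSup_nonneg fun ψ => Real.rpow_nonneg
      (Finset.sum_nonneg fun i _ => Real.rpow_nonneg (norm_nonneg _) _) _
  calc (∑ i, |z' i (S (T i))| ^ r) ^ (1/r)
      ≤ (∑ i, A i ^ p) ^ (1/p) * (∑ i, B i ^ q) ^ (1/q) := step4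
    _ ≤ (K₂ * ⨆ φ : DualBall X,
          (∑ i, ‖evalBall (T i : StrongDual ℝ X →L[ℝ] Y) φ‖ ^ p) ^ (1/p)) *
        (K₁ * ⨆ ψ : DualBall E, (∑ i, ‖evalBall (J (z' i)) ψ‖ ^ q) ^ (1/q)) := by
        exact mul_le_mul (h₂ n T) (h₁ n z') (Real.rpow_nonneg sumB_nonneg _)
          (mul_nonneg hK₂ hsupX)
    _ = _ := by ring
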